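/- Let z be an optimal solution to the polymatroid sum problem and let G(z) be the exchange graph on vertex set E with an arc (e,f) whenever some buyer i has w_i(e,f) > 0 (i.e., z_i − χ_f + χ_e ∈ B_i). Then the inclusion-wise minimal maximal overdemanded set equals the set R of items from which an oversold item is reachable in G(z). -/
import Mathlib


open Finset

variable {E : Type*} [Fintype E] [DecidableEq E]

/-- Characteristic (unit) vector of an item. -/
def chi (e : E) : E → ℤ := fun f => if f = e then 1 else 0

/-- The integer box `[0, b]_ℤ`. -/
def Box (b : E → ℤ) : Set (E → ℤ) := {z | ∀ e, 0 ≤ z e ∧ z e ≤ b e}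

/-- M-convex set: exchange property. -/
def MConvex (B : Set (E → ℤ)) : Prop :=
  ∀ x ∈ B, ∀ y ∈ B, ∀ e : E, y e < x e →
    ∃ f : E, x f < y f ∧ x - chi e + chi f ∈ B ∧ y + chi e - chi f ∈ B

/-- `ρ` is the rank function of `B`: `ρ S = max {z(S) : z ∈ B}`. -/
def IsRank (B : Set (E → ℤ)) (ρ : Finset E → ℤ) : Prop :=
  ∀ S : Finset E, IsGreatest ((fun z : E → ℤ => ∑ e ∈ S, z e) '' B) (ρ S)

/-- A set `S` is tight for `z` if `z(S) = ρ S`. -/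
def Tight (ρ : Finset E → ℤ) (z : E → ℤ) (S : Finset E) : Prop :=
  ∑ e ∈ S, z e = ρ S

/-- Total supply covered by the allocation `z`, capped by `b`. -/
def coveredValue {N : Type*} [Fintype N] (b : E → ℤ) (z : N → E → ℤ) : ℤ :=
  ∑ e : E, min (∑ i, z i e) (b e)

/-- The dual objective `Σ_i ρ_i(E∖S) + b(S)`. -/
def dualValue {N : Type*} [Fintype N] (b : E → ℤ) (ρ : N → Finset E → ℤ)
    (S : Finset E) : ℤ :=
  ∑ i, ρ i Sᶜ + ∑ e ∈ S, b e

/-- The three characterizing properties of a maximal overdemanded set, given an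
optimal allocation `z`: the complement is `i`-tight for all `i`, `S` contains no
undersold item, and `S` contains every oversold item. -/
def OverProps {N : Type*} [Fintype N] (b : E → ℤ) (ρ : N → Finset E → ℤ)
    (z : N → E → ℤ) (S : Finset E) : Prop :=
  (∀ i, ∑ e ∈ Sᶜ, z i e = ρ i Sᶜ) ∧
  (∀ e ∈ S, ¬ (∑ i, z i e < b e)) ∧
  (∀ e, b e < ∑ i, z i e → e ∈ S)


/-- Exchange-graph arc: some buyer can exchange one unit of `f` for one unit of `e`. -/
def ExArc {N : Type*} (B : N → Set (E → ℤ)) (z : N → E → ℤ) (e f : E) : Prop :=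
  ∃ i, z i - chi f + chi e ∈ B i

set_option linter.unusedSectionVars false

lemma chi_apply (e f : E) : chi e f = if f = e then 1 else 0 := rfl

lemma mexch {B : Set (E → ℤ)} (hM : MConvex B) (f g : ℕ → E) :
    ∀ (n : ℕ) (J : Finset ℕ), J.card = n →
      (∀ j ∈ J, ∀ l ∈ J, f j ≠ g l) →
      (∀ j ∈ J, ∀ l ∈ J, j ≠ l → f j ≠ f l) →
      (∀ j ∈ J, ∀ l ∈ J, j ≠ l → g j ≠ g l) →
      ∀ z ∈ B, (∀ j ∈ J, z - chi (g j) + chi (f j) ∈ B) →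
      (∀ j ∈ J, ∀ l ∈ J, j < l → z - chi (g l) + chi (f j) ∉ B) →
      z + ∑ j ∈ J, (chi (f j) - chi (g j)) ∈ B := by
  intro n
  induction n with
  | zero =>
    intro J hJ _ _ _ z hz _ _
    rw [Finset.card_eq_zero] at hJ
    simpa [hJ] using hz
  | succ n ih =>
    intro J hJ hfg hff hgg z hz h1 h2
    have hne : J.Nonempty := by rw [← Finset.card_pos, hJ]; omega
    set M := J.max' hne with hMdef
    have hMJ : M ∈ J := J.max'_mem hne
    have hmax : ∀ j ∈ J, j ≤ M := fun j hj => J.le_max' j hj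
    set z' := z - chi (g M) + chi (f M) with hz'def
    have hz' : z' ∈ B := h1 M hMJ
    set J' := J.erase M with hJ'def
    have hJ'c : J'.card = n := by
      rw [hJ'def, Finset.card_erase_of_mem hMJ, hJ]; omega
    have hmemJ : ∀ j ∈ J', j ∈ J ∧ j < M := by
      intro j hj
      have h1 := Finset.mem_of_mem_erase hj
      have h2 := Finset.ne_of_mem_erase hj
      exact ⟨h1, lt_of_le_of_ne (hmax j h1) h2⟩
    -- step exchanges remain valid
    have h1' : ∀ j ∈ J', z' - chi (g j) + chi (f j) ∈ B := by
      intro j hj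
      obtain ⟨hjJ, hjM⟩ := hmemJ j hj
      have hu : z - chi (g j) + chi (f j) ∈ B := h1 j hjJ
      have hne1 : f M ≠ f j := hff M hMJ j hjJ (by omega)
      have hne2 : f M ≠ g j := hfg M hMJ j hjJ
      have hne3 : f M ≠ g M := hfg M hMJ M hMJ
      have hlt : (z - chi (g j) + chi (f j)) (f M) < z' (f M) := by
        simp only [hz'def, Pi.add_apply, Pi.sub_apply, chi_apply]
        simp [hne1, hne2, hne3]
      obtain ⟨ff, hlt2, hB2, hB3⟩ := hM z' hz' _ hu (f M) hlt
      have hcase : ff = f j ∨ ff = g M := by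
        by_contra hc
        push_neg at hc
        obtain ⟨hc1, hc2⟩ := hc
        simp only [hz'def, Pi.add_apply, Pi.sub_apply, chi_apply, if_neg hc1, if_neg hc2] at hlt2
        split_ifs at hlt2 <;> omega
      rcases hcase with h | h
      · exfalso
        rw [h] at hB2
        have heq : z' - chi (f M) + chi (f j) = z - chi (g M) + chi (f j) := by
          rw [hz'def]; abel
        rw [heq] at hB2
        exact h2 j hjJ M hMJ hjM hB2
      · rw [h] at hB3
        have heq : (z - chi (g j) + chi (f j)) + chi (f M) - chi (g M)
            = z' - chi (g j) + chi (f j) := by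
          rw [hz'def]; abel
        rw [heq] at hB3
        exact hB3
    -- non-step exchanges remain invalid
    have h2' : ∀ j ∈ J', ∀ l ∈ J', j < l → z' - chi (g l) + chi (f j) ∉ B := by
      intro j hj l hl hjl hv
      obtain ⟨hjJ, hjM⟩ := hmemJ j hj
      obtain ⟨hlJ, hlM⟩ := hmemJ l hl
      set v := z' - chi (g l) + chi (f j) with hvdef
      have hne1 : f M ≠ g M := hfg M hMJ M hMJ
      have hne2 : f M ≠ g l := hfg M hMJ l hlJ
      have hne3 : f M ≠ f j := hff M hMJ j hjJ (by omega)
      have hlt : z (f M) < v (f M) := by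
        simp only [hvdef, hz'def, Pi.add_apply, Pi.sub_apply, chi_apply]
        simp [hne1, hne2, hne3]
      obtain ⟨ff, hlt2, hB2, hB3⟩ := hM v hv z hz (f M) hlt
      have hcase : ff = g M ∨ ff = g l := by
        by_contra hc
        push_neg at hc
        obtain ⟨hc1, hc2⟩ := hc
        simp only [hvdef, hz'def, Pi.add_apply, Pi.sub_apply, chi_apply, if_neg hc1, if_neg hc2] at hlt2
        split_ifs at hlt2 <;> omega
      rcases hcase with h | h
      · rw [h] at hB2
        have heq : v - chi (f M) + chi (g M) = z - chi (g l) + chi (f j) := by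
          rw [hvdef, hz'def]; abel
        rw [heq] at hB2
        exact h2 j hjJ l hlJ hjl hB2
      · rw [h] at hB2
        have heq : v - chi (f M) + chi (g l) = z - chi (g M) + chi (f j) := by
          rw [hvdef, hz'def]; abel
        rw [heq] at hB2
        exact h2 j hjJ M hMJ hjM hB2
    have := ih J' hJ'c
      (fun j hj l hl => hfg j (hmemJ j hj).1 l (hmemJ l hl).1)
      (fun j hj l hl => hff j (hmemJ j hj).1 l (hmemJ l hl).1)
      (fun j hj l hl => hgg j (hmemJ j hj).1 l (hmemJ l hl).1)
      z' hz' h1' h2'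
    have heq : z + ∑ j ∈ J, (chi (f j) - chi (g j))
        = z' + ∑ j ∈ J', (chi (f j) - chi (g j)) := by
      rw [hz'def, hJ'def, ← Finset.sum_erase_add J _ hMJ]; abel
    rw [heq]
    exact this

lemma sum_chi (s : Finset E) (e : E) : ∑ t ∈ s, chi e t = if e ∈ s then 1 else 0 := by
  simp only [chi_apply]
  exact Finset.sum_ite_eq' s e (fun _ => (1 : ℤ))

/-- Weak duality. -/
lemma weakDual {N : Type*} [Fintype N] (b : E → ℤ) (B : N → Set (E → ℤ))
    (ρ : N → Finset E → ℤ) (hρ : ∀ i, IsRank (B i) (ρ i))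
    (z' : N → E → ℤ) (hz' : ∀ i, z' i ∈ B i) (T : Finset E) :
    coveredValue b z' ≤ dualValue b ρ T := by
  have hdec : coveredValue b z'
      = ∑ e ∈ Tᶜ, min (∑ i, z' i e) (b e) + ∑ e ∈ T, min (∑ i, z' i e) (b e) := by
    rw [coveredValue, ← Finset.sum_add_sum_compl T (fun e => min (∑ i, z' i e) (b e))]
    ring
  rw [hdec, dualValue]
  have h1 : ∑ e ∈ Tᶜ, min (∑ i, z' i e) (b e) ≤ ∑ i, ρ i Tᶜ := by
    calc ∑ e ∈ Tᶜ, min (∑ i, z' i e) (b e)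
        ≤ ∑ e ∈ Tᶜ, ∑ i, z' i e := Finset.sum_le_sum fun e _ => min_le_left _ _
      _ = ∑ i, ∑ e ∈ Tᶜ, z' i e := Finset.sum_comm
      _ ≤ ∑ i, ρ i Tᶜ := Finset.sum_le_sum fun i _ => (hρ i Tᶜ).2 ⟨z' i, hz' i, rfl⟩
  have h2 : ∑ e ∈ T, min (∑ i, z' i e) (b e) ≤ ∑ e ∈ T, b e :=
    Finset.sum_le_sum fun e _ => min_le_right _ _
  omega

/-- If `Sᶜ` is `i`-tight for all `i` and an arc goes from `e` into `S`, then `e ∈ S`. -/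
lemma mem_of_arc {N : Type*} [Fintype N] {B : N → Set (E → ℤ)}
    {ρ : N → Finset E → ℤ} (hρ : ∀ i, IsRank (B i) (ρ i))
    {z : N → E → ℤ} {S : Finset E} (ht : ∀ i, ∑ e ∈ Sᶜ, z i e = ρ i Sᶜ)
    {e f : E} (harc : ExArc B z e f) (hf : f ∈ S) : e ∈ S := by
  by_contra heS
  obtain ⟨i, hB⟩ := harc
  have hub : ∑ t ∈ Sᶜ, (z i - chi f + chi e) t ≤ ρ i Sᶜ := (hρ i Sᶜ).2 ⟨_, hB, rfl⟩
  have hsum : ∑ t ∈ Sᶜ, (z i - chi f + chi e) t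
      = ∑ t ∈ Sᶜ, z i t - (if f ∈ Sᶜ then 1 else 0) + (if e ∈ Sᶜ then 1 else 0) := by
    simp only [Pi.add_apply, Pi.sub_apply, Finset.sum_add_distrib, Finset.sum_sub_distrib,
      sum_chi]
  rw [hsum, ht i, if_neg (by simpa using hf), if_pos (Finset.mem_compl.mpr heS)] at hub
  omega

/-- Tightness of the complement of an "arc-closed" set. -/
lemma tight_of_closed {N : Type*} [Fintype N] {B : N → Set (E → ℤ)}
    (hM : ∀ i, MConvex (B i)) {ρ : N → Finset E → ℤ} (hρ : ∀ i, IsRank (B i) (ρ i))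
    {z : N → E → ℤ} (hz : ∀ i, z i ∈ B i) (S : Finset E)
    (hcl : ∀ e f, e ∉ S → ExArc B z e f → f ∉ S)
    (i : N) : ∑ e ∈ Sᶜ, z i e = ρ i Sᶜ := by
  have hub : ∀ y ∈ B i, ∑ e ∈ Sᶜ, y e ≤ ρ i Sᶜ := fun y hy => (hρ i Sᶜ).2 ⟨y, hy, rfl⟩
  obtain ⟨y₀, hy₀, hval⟩ := (hρ i Sᶜ).1
  have hval' : ∑ e ∈ Sᶜ, y₀ e = ρ i Sᶜ := hval
  clear hval
  suffices h : ∀ n (y : E → ℤ), y ∈ B i → (∑ e, (y e - z i e).natAbs) = n →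
      ∑ e ∈ Sᶜ, y e ≤ ∑ e ∈ Sᶜ, z i e by
    have h2 := h _ y₀ hy₀ rfl
    have h3 := hub (z i) (hz i)
    omega
  intro n
  induction n using Nat.strong_induction_on with
  | _ n ih =>
    intro y hy hn
    by_contra hgt
    push_neg at hgt
    have hex : ∃ e ∈ Sᶜ, z i e < y e := by
      by_contra h
      push_neg at h
      exact absurd (Finset.sum_le_sum h) (not_le.mpr hgt)
    obtain ⟨e, heS, he⟩ := hex
    obtain ⟨f, hf, hB1, hB2⟩ := hM i y hy (z i) (hz i) e he
    have harc : ExArc B z e f := by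
      refine ⟨i, ?_⟩
      have heq : z i - chi f + chi e = z i + chi e - chi f := by abel
      rw [heq]
      exact hB2
    have hfS : f ∈ Sᶜ := Finset.mem_compl.mpr
      (hcl e f (Finset.mem_compl.mp heS) harc)
    have hef : e ≠ f := by
      intro h
      rw [h] at he
      exact absurd hf (by omega)
    set y' := y - chi e + chi f with hy'def
    have hy'e : y' e = y e - 1 := by
      simp [hy'def, chi_apply, hef]
    have hy'f : y' f = y f + 1 := by
      simp [hy'def, chi_apply, hef, Ne.symm hef]
    have hy'o : ∀ t, t ≠ e → t ≠ f → y' t = y t := by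
      intro t h1 h2
      simp [hy'def, chi_apply, h1, h2]
    have hsum' : ∑ t ∈ Sᶜ, y' t = ∑ t ∈ Sᶜ, y t := by
      simp only [hy'def, Pi.add_apply, Pi.sub_apply, Finset.sum_add_distrib,
        Finset.sum_sub_distrib, sum_chi, if_pos heS, if_pos hfS]
      ring
    have hfu : f ∈ (Finset.univ.erase e) := by
      simp [Ne.symm hef]
    have hmeasure : ∑ t, (y' t - z i t).natAbs + 2 = ∑ t, (y t - z i t).natAbs := by
      rw [← Finset.sum_erase_add Finset.univ _ (Finset.mem_univ e),
        ← Finset.sum_erase_add Finset.univ _ (Finset.mem_univ e),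
        ← Finset.sum_erase_add _ _ hfu, ← Finset.sum_erase_add _ _ hfu]
      have hcongr : ∑ t ∈ (Finset.univ.erase e).erase f, (y' t - z i t).natAbs
          = ∑ t ∈ (Finset.univ.erase e).erase f, (y t - z i t).natAbs := by
        refine Finset.sum_congr rfl fun t ht => ?_
        rw [hy'o t (Finset.ne_of_mem_erase (Finset.mem_of_mem_erase ht))
          (Finset.ne_of_mem_erase ht)]
      rw [hcongr, hy'e, hy'f]
      omega
    have hlt : ∑ t, (y' t - z i t).natAbs < n := by omega
    have := ih _ hlt y' hB1 rfl
    omega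

lemma no_undersold_reach {N : Type*} [Fintype N] (b : E → ℤ) (B : N → Set (E → ℤ))
    (hM : ∀ i, MConvex (B i)) (z : N → E → ℤ) (hz : ∀ i, z i ∈ B i)
    (hopt : ∀ z' : N → E → ℤ, (∀ i, z' i ∈ B i) →
      coveredValue b z' ≤ coveredValue b z)
    (e₀ g₀ : E) (hu : ∑ i, z i e₀ < b e₀)
    (hreach : Relation.ReflTransGen (ExArc B z) e₀ g₀)
    (hg : b g₀ < ∑ i, z i g₀) : False := by
  classical
  -- existence of a walk
  have hex : ∃ k : ℕ, ∃ p : ℕ → E, (∑ i, z i (p 0) < b (p 0)) ∧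
      (b (p k) < ∑ i, z i (p k)) ∧ ∀ j < k, ExArc B z (p j) (p (j+1)) := by
    have hwalk : ∃ k : ℕ, ∃ p : ℕ → E, p 0 = e₀ ∧ p k = g₀ ∧
        ∀ j < k, ExArc B z (p j) (p (j+1)) := by
      clear hg hu
      induction hreach with
      | refl => exact ⟨0, fun _ => e₀, rfl, rfl, by omega⟩
      | @tail c d hcd harc ih =>
        obtain ⟨k, p, h0, hk, hstep⟩ := ih
        refine ⟨k + 1, fun j => if j ≤ k then p j else d, by simp [h0], by simp, ?_⟩
        intro j hj
        rcases Nat.lt_or_ge j k with h | h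
        · simpa [Nat.le_of_lt h, Nat.succ_le_of_lt h] using hstep j h
        · have hjk : j = k := by omega
          subst hjk
          simpa [hk] using harc
    obtain ⟨k, p, h0, hk, hstep⟩ := hwalk
    exact ⟨k, p, by rw [h0]; exact hu, by rw [hk]; exact hg, hstep⟩
  set k₀ := Nat.find hex with hk₀def
  obtain ⟨p, hp0, hpk, hstep⟩ := Nat.find_spec hex
  rw [← hk₀def] at hpk hstep
  have hk₀pos : 0 < k₀ := by
    rcases Nat.eq_zero_or_pos k₀ with h | h
    · exfalso; rw [h] at hpk; omega
    · exact h
  -- no shortcuts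
  have hshort : ∀ a c, a + 1 < c → c ≤ k₀ → ¬ ExArc B z (p a) (p c) := by
    intro a c hac hck harc
    set δ := c - a - 1 with hδ
    have hδpos : 0 < δ := by omega
    apply Nat.find_min hex (show k₀ - δ < k₀ by omega)
    refine ⟨fun j => if j ≤ a then p j else p (j + δ), by simpa using hp0, ?_, ?_⟩
    · have h1 : ¬ (k₀ - δ ≤ a) := by omega
      have h2 : k₀ - δ + δ = k₀ := by omega
      simp only [if_neg h1, h2]
      exact hpk
    · intro j hj
      rcases Nat.lt_or_ge j a with h | h
      · simpa [Nat.le_of_lt h, Nat.succ_le_of_lt h] using hstep j (by omega)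
      · rcases Nat.eq_or_lt_of_le h with h' | h'
        · have ha1 : ¬ (a + 1 ≤ a) := by omega
          have ha2 : a + 1 + δ = c := by omega
          subst h'
          simp only [le_refl, if_pos, if_neg ha1, ha2]
          exact harc
        · have hj1 : ¬ (j ≤ a) := by omega
          have hj2 : ¬ (j + 1 ≤ a) := by omega
          simp only [if_neg hj1, if_neg hj2]
          have : j + δ + 1 = j + 1 + δ := by omega
          rw [← this]
          exact hstep (j + δ) (by omega)
  -- injectivity
  have hinj : ∀ a c, a < c → c ≤ k₀ → p a ≠ p c := by
    intro a c hac hck heq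
    rcases Nat.eq_or_lt_of_le hck with h | h
    · apply Nat.find_min hex (show a < k₀ by omega)
      refine ⟨p, hp0, ?_, fun j hj => hstep j (by omega)⟩
      rw [heq, h]; exact hpk
    · apply Nat.find_min hex (show k₀ - (c - a) < k₀ by omega)
      refine ⟨fun j => if j ≤ a then p j else p (j + (c - a)), by simp [hp0], ?_, ?_⟩
      · have h1 : ¬ (k₀ - (c - a) ≤ a) := by omega
        have h2 : k₀ - (c - a) + (c - a) = k₀ := by omega
        simp only [if_neg h1, h2]
        exact hpk
      · intro j hj
        rcases Nat.lt_or_ge j a with h' | h'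
        · simpa [Nat.le_of_lt h', Nat.succ_le_of_lt h'] using hstep j (by omega)
        · rcases Nat.eq_or_lt_of_le h' with h'' | h''
          · have ha1 : ¬ (a + 1 ≤ a) := by omega
            have ha2 : a + 1 + (c - a) = c + 1 := by omega
            subst h''
            simp only [le_refl, if_pos, if_neg ha1, ha2, heq]
            exact hstep c (by omega)
          · have hj1 : ¬ (j ≤ a) := by omega
            have hj2 : ¬ (j + 1 ≤ a) := by omega
            simp only [if_neg hj1, if_neg hj2]
            have : j + (c - a) + 1 = j + 1 + (c - a) := by omega
            rw [← this]
            exact hstep (j + (c - a)) (by omega)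
  -- choose buyers
  have harcs : ∀ j, j < k₀ → ∃ i, z i - chi (p (j+1)) + chi (p j) ∈ B i := hstep
  let bi : ℕ → N := fun j => if h : j < k₀ then (harcs j h).choose else (harcs 0 hk₀pos).choose
  have hbi : ∀ j, j < k₀ → z (bi j) - chi (p (j+1)) + chi (p j) ∈ B (bi j) := by
    intro j hj
    simp only [bi, dif_pos hj]
    exact (harcs j hj).choose_spec
  -- no two consecutive arcs by same buyer
  have hnc : ∀ j, j + 1 < k₀ → bi j ≠ bi (j+1) := by
    intro j hj heq
    set w := z (bi j) with hw
    have hu' : w - chi (p (j+1)) + chi (p j) ∈ B (bi j) := hbi j (by omega)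
    have hv : w - chi (p (j+2)) + chi (p (j+1)) ∈ B (bi j) := by
      have h := hbi (j+1) hj
      rw [← heq] at h
      exact h
    have hd1 : p j ≠ p (j+1) := hinj j (j+1) (by omega) (by omega)
    have hd2 : p j ≠ p (j+2) := hinj j (j+2) (by omega) (by omega)
    have hd3 : p (j+1) ≠ p (j+2) := hinj (j+1) (j+2) (by omega) (by omega)
    have hlt : (w - chi (p (j+2)) + chi (p (j+1))) (p j)
        < (w - chi (p (j+1)) + chi (p j)) (p j) := by
      simp only [Pi.add_apply, Pi.sub_apply, chi_apply]
      simp [hd1, hd2]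
    obtain ⟨ff, hlt2, hB2, hB3⟩ := hM (bi j) _ hu' _ hv (p j) hlt
    have hffeq : ff = p (j+1) := by
      by_contra hc
      simp only [Pi.add_apply, Pi.sub_apply, chi_apply, if_neg hc] at hlt2
      split_ifs at hlt2 <;> omega
    rw [hffeq] at hB3
    have heq2 : (w - chi (p (j+2)) + chi (p (j+1))) + chi (p j) - chi (p (j+1))
        = z (bi j) - chi (p (j+2)) + chi (p j) := by
      rw [hw]; abel
    rw [heq2] at hB3
    exact hshort j (j+2) (by omega) (by omega) ⟨bi j, hB3⟩
  -- simultaneous exchange per buyer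
  have key : ∀ ii : N, z ii + ∑ j ∈ (Finset.range k₀).filter (fun j => bi j = ii),
      (chi (p j) - chi (p (j+1))) ∈ B ii := by
    intro ii
    set J := (Finset.range k₀).filter (fun j => bi j = ii) with hJdef
    have hJmem : ∀ j ∈ J, j < k₀ ∧ bi j = ii := by
      intro j hj
      rw [hJdef, Finset.mem_filter, Finset.mem_range] at hj
      exact hj
    have hnocons : ∀ j ∈ J, ∀ l ∈ J, j ≠ l + 1 := by
      intro j hj l hl hjl
      obtain ⟨hjk, hjb⟩ := hJmem j hj
      obtain ⟨hlk, hlb⟩ := hJmem l hl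
      subst hjl
      exact hnc l hjk (by rw [hlb, hjb])
    apply mexch (hM ii) p (fun j => p (j+1)) J.card J rfl
    · intro j hj l hl
      have hjk := (hJmem j hj).1
      have hlk := (hJmem l hl).1
      have hne : j ≠ l + 1 := hnocons j hj l hl
      rcases Nat.lt_or_ge j (l+1) with h | h
      · exact hinj j (l+1) h (by omega)
      · exact (hinj (l+1) j (by omega) (by omega)).symm
    · intro j hj l hl hjl
      have hjk := (hJmem j hj).1
      have hlk := (hJmem l hl).1
      rcases Nat.lt_or_ge j l with h | h
      · exact hinj j l h (by omega)
      · exact (hinj l j (by omega) (by omega)).symm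
    · intro j hj l hl hjl
      have hjk := (hJmem j hj).1
      have hlk := (hJmem l hl).1
      rcases Nat.lt_or_ge j l with h | h
      · exact hinj (j+1) (l+1) (by omega) (by omega)
      · exact (hinj (l+1) (j+1) (by omega) (by omega)).symm
    · exact hz ii
    · intro j hj
      obtain ⟨hjk, hjb⟩ := hJmem j hj
      rw [← hjb]
      exact hbi j hjk
    · intro j hj l hl hjl hmem
      have hjk := (hJmem j hj).1
      have hlk := (hJmem l hl).1
      exact hshort j (l+1) (by omega) (by omega) ⟨ii, hmem⟩
  -- build the improved allocation
  set z' : N → E → ℤ := fun ii => z ii + ∑ j ∈ (Finset.range k₀).filter (fun j => bi j = ii),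
      (chi (p j) - chi (p (j+1))) with hz'def
  have hz'B : ∀ ii, z' ii ∈ B ii := key
  have hsum : ∀ t, (∑ ii, z' ii t) = (∑ ii, z ii t) + chi (p 0) t - chi (p k₀) t := by
    intro t
    have h2 : ∑ ii : N, ∑ j ∈ (Finset.range k₀).filter (fun j => bi j = ii),
        (chi (p j) t - chi (p (j+1)) t) = ∑ j ∈ Finset.range k₀, (chi (p j) t - chi (p (j+1)) t) :=
      Finset.sum_fiberwise _ _ _
    have h3 : ∑ j ∈ Finset.range k₀, (chi (p j) t - chi (p (j+1)) t)
        = chi (p 0) t - chi (p k₀) t := Finset.sum_range_sub' (fun j => chi (p j) t) k₀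
    calc ∑ ii, z' ii t
        = ∑ ii, (z ii t + ∑ j ∈ (Finset.range k₀).filter (fun j => bi j = ii),
            (chi (p j) t - chi (p (j+1)) t)) := by
          refine Finset.sum_congr rfl fun ii _ => ?_
          simp [hz'def, Finset.sum_apply]
      _ = (∑ ii, z ii t) + ∑ ii : N, ∑ j ∈ (Finset.range k₀).filter (fun j => bi j = ii),
            (chi (p j) t - chi (p (j+1)) t) := Finset.sum_add_distrib
      _ = (∑ ii, z ii t) + (chi (p 0) t - chi (p k₀) t) := by rw [h2, h3]
      _ = (∑ ii, z ii t) + chi (p 0) t - chi (p k₀) t := by ring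
  have h01 : p 0 ≠ p k₀ := hinj 0 k₀ hk₀pos le_rfl
  have hcov : coveredValue b z' = coveredValue b z + 1 := by
    unfold coveredValue
    have hterm : ∀ t : E, min (∑ i, z' i t) (b t)
        = min (∑ i, z i t) (b t) + (if t = p 0 then 1 else 0) := by
      intro t
      rcases eq_or_ne t (p 0) with h | h
      · subst h
        rw [hsum]
        simp only [chi_apply, if_pos rfl, if_neg h01]
        omega
      · rcases eq_or_ne t (p k₀) with h' | h'
        · subst h'
          rw [hsum]
          simp only [chi_apply, if_pos rfl, if_neg h]
          omega
        · rw [hsum]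
          simp only [chi_apply, if_neg h, if_neg h']
          omega
    calc ∑ t, min (∑ i, z' i t) (b t)
        = ∑ t, (min (∑ i, z i t) (b t) + (if t = p 0 then 1 else 0)) :=
          Finset.sum_congr rfl fun t _ => hterm t
      _ = (∑ t, min (∑ i, z i t) (b t)) + ∑ t : E, (if t = p 0 then 1 else 0) :=
          Finset.sum_add_distrib
      _ = (∑ t, min (∑ i, z i t) (b t)) + 1 := by
          rw [Finset.sum_ite_eq' Finset.univ (p 0) (fun _ => (1 : ℤ))]
          simp
  have := hopt z' hz'B
  omega

/-- Given an optimal solution `z` of the polymatroid sum problem, the inclusion-wise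
minimal maximal overdemanded set is exactly the set of items from which an oversold
item is reachable in the exchange graph. -/
theorem stmt8 {N : Type*} [Fintype N] (b : E → ℤ) (B : N → Set (E → ℤ))
    (hBox : ∀ i, B i ⊆ Box b) (hM : ∀ i, MConvex (B i))
    (ρ : N → Finset E → ℤ) (hρ : ∀ i, IsRank (B i) (ρ i))
    (z : N → E → ℤ) (hz : ∀ i, z i ∈ B i)
    (hopt : ∀ z' : N → E → ℤ, (∀ i, z' i ∈ B i) →
      coveredValue b z' ≤ coveredValue b z) :
    ∀ S : Finset E,
      ((∀ T : Finset E, dualValue b ρ S ≤ dualValue b ρ T) ∧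
        ∀ S' : Finset E, (∀ T : Finset E, dualValue b ρ S' ≤ dualValue b ρ T) →
          S ⊆ S') ↔
      (∀ e : E, e ∈ S ↔
        ∃ g : E, Relation.ReflTransGen (ExArc B z) e g ∧ b g < ∑ i, z i g) := by
  classical
  intro S
  set R : Finset E := Finset.univ.filter
    (fun e => ∃ g, Relation.ReflTransGen (ExArc B z) e g ∧ b g < ∑ i, z i g) with hRdef
  have hmemR : ∀ e, e ∈ R ↔
      (∃ g, Relation.ReflTransGen (ExArc B z) e g ∧ b g < ∑ i, z i g) := by
    intro e
    rw [hRdef, Finset.mem_filter]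
    simp
  have hclR : ∀ e f, e ∉ R → ExArc B z e f → f ∉ R := by
    intro e f he harc hf
    apply he
    rw [hmemR] at hf ⊢
    obtain ⟨g, hpath, hg⟩ := hf
    exact ⟨g, Relation.ReflTransGen.head harc hpath, hg⟩
  have htR : ∀ i, ∑ e ∈ Rᶜ, z i e = ρ i Rᶜ := tight_of_closed hM hρ hz R hclR
  have hoverR : ∀ e, b e < ∑ i, z i e → e ∈ R := by
    intro e he
    rw [hmemR]
    exact ⟨e, Relation.ReflTransGen.refl, he⟩
  have hunderR : ∀ e ∈ R, ¬ (∑ i, z i e < b e) := by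
    intro e he hu
    rw [hmemR] at he
    obtain ⟨g, hpath, hg⟩ := he
    exact no_undersold_reach b B hM z hz hopt e g hu hpath hg
  have hEq : coveredValue b z = dualValue b ρ R := by
    rw [coveredValue, dualValue,
      ← Finset.sum_add_sum_compl R (fun e => min (∑ i, z i e) (b e))]
    have h1 : ∑ e ∈ R, min (∑ i, z i e) (b e) = ∑ e ∈ R, b e :=
      Finset.sum_congr rfl fun e he => min_eq_right (by have := hunderR e he; omega)
    have h2 : ∑ e ∈ Rᶜ, min (∑ i, z i e) (b e) = ∑ i, ρ i Rᶜ := by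
      have h3 : ∑ e ∈ Rᶜ, min (∑ i, z i e) (b e) = ∑ e ∈ Rᶜ, ∑ i, z i e :=
        Finset.sum_congr rfl fun e he => min_eq_left (by
          have h4 : e ∉ R := Finset.mem_compl.mp he
          have h5 := mt (hoverR e) h4
          omega)
      rw [h3, Finset.sum_comm]
      exact Finset.sum_congr rfl fun i _ => htR i
    rw [h1, h2]
    ring
  have hMinR : ∀ T, dualValue b ρ R ≤ dualValue b ρ T := by
    intro T
    rw [← hEq]
    exact weakDual b B ρ hρ z hz T
  have hSub : ∀ S' : Finset E, (∀ T, dualValue b ρ S' ≤ dualValue b ρ T) → R ⊆ S' := by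
    intro S' hmin
    have hdual : coveredValue b z = dualValue b ρ S' :=
      le_antisymm (weakDual b B ρ hρ z hz S') (le_trans (hmin R) (le_of_eq hEq.symm))
    rw [coveredValue, dualValue,
      ← Finset.sum_add_sum_compl S' (fun e => min (∑ i, z i e) (b e))] at hdual
    have hA : ∑ e ∈ S'ᶜ, min (∑ i, z i e) (b e) ≤ ∑ e ∈ S'ᶜ, ∑ i, z i e :=
      Finset.sum_le_sum fun e _ => min_le_left _ _
    have hB' : ∀ i, ∑ e ∈ S'ᶜ, z i e ≤ ρ i S'ᶜ := fun i => (hρ i S'ᶜ).2 ⟨z i, hz i, rfl⟩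
    have hBsum : ∑ i, ∑ e ∈ S'ᶜ, z i e ≤ ∑ i, ρ i S'ᶜ :=
      Finset.sum_le_sum fun i _ => hB' i
    have hC : ∑ e ∈ S', min (∑ i, z i e) (b e) ≤ ∑ e ∈ S', b e :=
      Finset.sum_le_sum fun e _ => min_le_right _ _
    have hcomm : ∑ e ∈ S'ᶜ, ∑ i, z i e = ∑ i, ∑ e ∈ S'ᶜ, z i e := Finset.sum_comm
    have heq1 : ∑ i, ∑ e ∈ S'ᶜ, z i e = ∑ i, ρ i S'ᶜ := by omega
    have heq2 : ∑ e ∈ S'ᶜ, min (∑ i, z i e) (b e) = ∑ e ∈ S'ᶜ, ∑ i, z i e := by omega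
    have htS : ∀ i, ∑ e ∈ S'ᶜ, z i e = ρ i S'ᶜ := fun i =>
      (Finset.sum_eq_sum_iff_of_le (fun i _ => hB' i)).mp heq1 i (Finset.mem_univ i)
    have hoverS : ∀ e, b e < ∑ i, z i e → e ∈ S' := by
      intro e he
      by_contra heS
      have hmem : e ∈ S'ᶜ := Finset.mem_compl.mpr heS
      have h6 := (Finset.sum_eq_sum_iff_of_le
        (fun e (_ : e ∈ S'ᶜ) => min_le_left (∑ i, z i e) (b e))).mp heq2 e hmem
      rw [min_eq_left_iff] at h6
      omega
    intro e heR
    rw [hmemR] at heR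
    obtain ⟨g, hpath, hg⟩ := heR
    induction hpath using Relation.ReflTransGen.head_induction_on with
    | refl => exact hoverS g hg
    | head harc _ ihm => exact mem_of_arc hρ htS harc ihm
  constructor
  · rintro ⟨hmin, hminimal⟩ e
    constructor
    · intro he
      exact (hmemR e).mp (hminimal R hMinR he)
    · intro he
      exact hSub S hmin ((hmemR e).mpr he)
  · intro h
    have hSR : S = R := Finset.ext fun e => (h e).trans ((hmemR e)).symm
    rw [hSR]
    exact ⟨hMinR, fun S' h' => hSub S' h'⟩
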